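/- Define T : [0, 1] → ℝ by T(t) = Φ̄(0) − inf_{u ∈ ℝ} ( ((1 − t)/2) · Φ̄(−u) + ((1 + t)/2) · Φ̄(u) ). Then T(t) ≥ t for all t ∈ [0, 1], and T(0) = 0. -/

import Mathlib

/-- The symmetric linear-core surrogate `Φ̄`. -/
noncomputable def barPhi (Φ : ℝ → ℝ) (u : ℝ) : ℝ :=
  if 1 < u then Φ (1 - u) / deriv Φ 0
  else if u < -1 then Φ (-1 - u) / deriv Φ 0 + 2
  else -u + 1 + Φ 0 / deriv Φ 0

/-- The `H`-estimation error transformation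
`T(t) = Φ̄(0) - inf_u ((1-t)/2 · Φ̄(-u) + (1+t)/2 · Φ̄(u))`. -/
noncomputable def Tbar (Φ : ℝ → ℝ) (t : ℝ) : ℝ :=
  barPhi Φ 0 - ⨅ u : ℝ, ((1 - t) / 2 * barPhi Φ (-u) + (1 + t) / 2 * barPhi Φ u)

/-- `T(t) ≥ t` for all `t ∈ [0, 1]`, and `T(0) = 0`. -/
theorem Tbar_linear_lower_bound (Φ : ℝ → ℝ)
    (hconv : ConvexOn ℝ Set.univ Φ) (hdiff : Differentiable ℝ Φ)
    (hnn : ∀ u, 0 ≤ Φ u) (hd0 : 0 < deriv Φ 0) :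
    (∀ t ∈ Set.Icc (0 : ℝ) 1, t ≤ Tbar Φ t) ∧ Tbar Φ 0 = 0 := by
  set d := deriv Φ 0 with hd
  set c := Φ 0 / d with hc
  have hc0 : 0 ≤ c := div_nonneg (hnn 0) hd0.le
  have hbp0 : barPhi Φ 0 = 1 + c := by
    simp only [barPhi]
    norm_num
    rfl
  have hbp1 : barPhi Φ 1 = c := by
    simp only [barPhi]
    norm_num
    rfl
  have hbpm1 : barPhi Φ (-1) = 2 + c := by
    simp only [barPhi]
    norm_num
    rfl
  have hnonneg : ∀ u, 0 ≤ barPhi Φ u := by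
    intro u
    unfold barPhi
    split_ifs with h1 h2
    · exact div_nonneg (hnn _) hd0.le
    · have := div_nonneg (hnn (-1 - u)) hd0.le
      linarith
    · push_neg at h1 h2
      have : Φ 0 / deriv Φ 0 = c := rfl
      rw [this]
      linarith
  -- the key convexity fact: barPhi(-u) + barPhi u ≥ 2 + 2c
  have hkey : ∀ u : ℝ, 2 + 2 * c ≤ barPhi Φ (-u) + barPhi Φ u := by
    intro u
    rcases lt_trichotomy 1 u with h1 | h1 | h1
    · have h2 : -u < -1 := by linarith
      have e1 : barPhi Φ u = Φ (1 - u) / d := by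
        unfold barPhi; rw [if_pos h1]
      have e2 : barPhi Φ (-u) = Φ (u - 1) / d + 2 := by
        unfold barPhi
        rw [if_neg (by linarith), if_pos h2, show (-1:ℝ) - -u = u - 1 by ring]
      have hcv := hconv.2 (Set.mem_univ (1 - u)) (Set.mem_univ (u - 1))
        (by norm_num : (0:ℝ) ≤ 1/2) (by norm_num : (0:ℝ) ≤ 1/2) (by norm_num)
      have heq : (1/2 : ℝ) • (1 - u) + (1/2 : ℝ) • (u - 1) = 0 := by
        simp [smul_eq_mul]; ring
      rw [heq] at hcv
      simp only [smul_eq_mul] at hcv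
      have hdiv : Φ 0 / d ≤ (1/2 * Φ (1 - u) + 1/2 * Φ (u - 1)) / d := by
        gcongr
      have hsplit : (1/2 * Φ (1 - u) + 1/2 * Φ (u - 1)) / d
          = Φ (1 - u) / d / 2 + Φ (u - 1) / d / 2 := by ring
      rw [hsplit] at hdiv
      rw [e1, e2]
      rw [hc] at *
      linarith
    · subst h1
      rw [hbp1, hbpm1]; ring_nf; linarith
    · rcases lt_trichotomy u (-1) with h2 | h2 | h2
      · have h3 : 1 < -u := by linarith
        have e1 : barPhi Φ u = Φ (-1 - u) / d + 2 := by
          unfold barPhi; rw [if_neg (by linarith), if_pos h2]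
        have e2 : barPhi Φ (-u) = Φ (1 + u) / d := by
          unfold barPhi
          rw [if_pos h3, show (1:ℝ) - -u = 1 + u by ring]
        have hcv := hconv.2 (Set.mem_univ (-1 - u)) (Set.mem_univ (1 + u))
          (by norm_num : (0:ℝ) ≤ 1/2) (by norm_num : (0:ℝ) ≤ 1/2) (by norm_num)
        have heq : (1/2 : ℝ) • (-1 - u) + (1/2 : ℝ) • (1 + u) = 0 := by
          simp [smul_eq_mul]; ring
        rw [heq] at hcv
        simp only [smul_eq_mul] at hcv
        have hdiv : Φ 0 / d ≤ (1/2 * Φ (-1 - u) + 1/2 * Φ (1 + u)) / d := by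
          gcongr
        have hsplit : (1/2 * Φ (-1 - u) + 1/2 * Φ (1 + u)) / d
            = Φ (-1 - u) / d / 2 + Φ (1 + u) / d / 2 := by ring
        rw [hsplit] at hdiv
        rw [e1, e2]
        rw [hc] at *
        linarith
      · subst h2
        rw [hbpm1]
        norm_num [hbp1]
        linarith
      ·
        have e1 : barPhi Φ u = -u + 1 + c := by
          unfold barPhi; rw [if_neg (by linarith), if_neg (by linarith)]
        have e2 : barPhi Φ (-u) = u + 1 + c := by
          unfold barPhi; rw [if_neg (by linarith), if_neg (by linarith)]
          ring
        rw [e1, e2]; ring_nf; linarith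
  constructor
  · intro t ht
    obtain ⟨ht0, ht1⟩ := ht
    have hbdd : BddBelow (Set.range fun u : ℝ =>
        ((1 - t) / 2 * barPhi Φ (-u) + (1 + t) / 2 * barPhi Φ u)) := by
      refine ⟨0, ?_⟩
      rintro x ⟨u, rfl⟩
      have h1 : 0 ≤ (1 - t) / 2 := by linarith
      have h2 : 0 ≤ (1 + t) / 2 := by linarith
      exact add_nonneg (mul_nonneg h1 (hnonneg _)) (mul_nonneg h2 (hnonneg _))
    have hle := ciInf_le hbdd 1
    rw [hbp1, hbpm1] at hle
    have harith : (1 - t) / 2 * (2 + c) + (1 + t) / 2 * c = 1 - t + c := by ring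
    rw [harith] at hle
    unfold Tbar
    rw [hbp0]
    linarith
  · have hbdd : BddBelow (Set.range fun u : ℝ =>
        ((1 - (0:ℝ)) / 2 * barPhi Φ (-u) + (1 + (0:ℝ)) / 2 * barPhi Φ u)) := by
      refine ⟨0, ?_⟩
      rintro x ⟨u, rfl⟩
      have h1 : (0:ℝ) ≤ (1 - 0) / 2 := by norm_num
      have h2 : (0:ℝ) ≤ (1 + 0) / 2 := by norm_num
      exact add_nonneg (mul_nonneg h1 (hnonneg _)) (mul_nonneg h2 (hnonneg _))
    have hinf : (⨅ u : ℝ, ((1 - (0:ℝ)) / 2 * barPhi Φ (-u) + (1 + (0:ℝ)) / 2 * barPhi Φ u))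
        = 1 + c := by
      apply le_antisymm
      · have hle := ciInf_le hbdd 0
        simp only [neg_zero] at hle
        rw [hbp0] at hle
        calc _ ≤ (1 - (0:ℝ)) / 2 * (1 + c) + (1 + (0:ℝ)) / 2 * (1 + c) := hle
          _ = 1 + c := by ring
      · apply le_ciInf
        intro u
        have := hkey u
        linarith
    unfold Tbar
    rw [hbp0, hinf]
    ring
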